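/- Asymptotic inverse expansion (Regime II): Suppose φ(s) = sε + ½s² + K₁s^{η₁} + o(s^{η₁}) with 2 < η₁ ≤ 3. Then the inverse ψ satisfies, for each fixed s > 0 and γ > 1, ψ(sε²(γ-1)) = -ε + ε√(1 + 2s(γ-1)) + o(ε) as ε ↓ 0. -/

import Mathlib

open Real Filter Topology Asymptotics

theorem my_aux (γ K₁ η₁ : ℝ) (hγ : 1 < γ) (hη : 2 < η₁)
    (R : ℝ → ℝ) (hR : R =o[𝓝[>] (0:ℝ)] fun x => x ^ η₁)
    (s : ℝ) (hs : 0 < s) (u : ℝ → ℝ)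
    (hψ : ∀ᶠ ε in 𝓝[>] (0:ℝ),
      u ε * ε + (u ε)^2/2 + K₁ * (u ε) ^ η₁ + R (u ε) = s*ε^2*(γ-1) ∧ 0 ≤ u ε)
    (hψ0 : Tendsto u (𝓝[>] 0) (𝓝 0)) :
    (fun ε : ℝ => u ε - (-ε + ε * Real.sqrt (1 + 2*s*(γ-1)))) =o[𝓝[>] 0]
      fun ε => ε := by
  set l := 𝓝[>] (0:ℝ) with hl
  set C : ℝ := 1 + 2*s*(γ-1) with hCdef
  have hsγ : 0 < s*(γ-1) := mul_pos hs (by linarith)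
  have hC : 1 < C := by nlinarith
  set c : ℝ := Real.sqrt C with hcdef
  have hεpos : ∀ᶠ ε in l, 0 < ε := eventually_mem_nhdsWithin
  have htar : ∀ᶠ ε in l, 0 < s*ε^2*(γ-1) := hεpos.mono fun ε hε => mul_pos (mul_pos hs (pow_pos hε 2)) (by linarith)
  have htend : Tendsto (fun ε : ℝ => s*ε^2*(γ-1)) l (𝓝 0) := by
    have h1 : Tendsto (fun ε : ℝ => s*ε^2*(γ-1)) (𝓝 0) (𝓝 (s*0^2*(γ-1))) :=
      ((continuous_const.mul (continuous_pow 2)).mul continuous_const).tendsto 0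
    simpa using h1.mono_left nhdsWithin_le_nhds
  have hne : ∀ᶠ ε in l, s*ε^2*(γ-1) ≠ R 0 := by
    rcases le_or_gt (R 0) 0 with h | h
    · exact htar.mono fun ε hε => (h.trans_lt hε).ne'
    · have h2 : ∀ᶠ ε in l, s*ε^2*(γ-1) < R 0 :=
        htend.eventually (eventually_lt_nhds h)
      exact h2.mono fun ε hε => hε.ne
  have hupos : ∀ᶠ ε in l, 0 < u ε := by
    filter_upwards [hψ, hne] with ε hε hne'
    rcases hε.2.lt_or_eq with h | h
    · exact h
    · exfalso
      have heq := hε.1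
      rw [← h] at heq
      simp [Real.zero_rpow (ne_of_gt (by linarith : (0:ℝ) < η₁))] at heq
      exact hne' heq.symm
  have hu0' : Tendsto u l l := tendsto_nhdsWithin_iff.mpr ⟨hψ0, hupos⟩
  have hRu : ∀ᶠ ε in l, |R (u ε)| ≤ (u ε)^η₁ := by
    have h1 := hR.def one_pos
    filter_upwards [hu0'.eventually h1, hupos] with ε h hp
    simpa [Real.norm_eq_abs, abs_of_nonneg (Real.rpow_nonneg hp.le η₁)] using h
  set M : ℝ := 2 * |K₁|  + 2 with hM
  have hMpos : 0 < M := by positivity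
  set E : ℝ → ℝ := fun ε => 2*K₁*(u ε)^η₁ + 2*R (u ε) with hE
  have hEbound : ∀ᶠ ε in l, |E ε| ≤ M * (u ε)^η₁ := by
    filter_upwards [hRu, hupos] with ε h hp
    have h0 : (0:ℝ) ≤ (u ε)^η₁ := Real.rpow_nonneg hp.le η₁
    have habs := abs_le.mp h
    have h1 : |E ε| ≤ |2*K₁*(u ε)^η₁| + |2*R (u ε)| := abs_add_le _ _
    have h2 : |2*K₁*(u ε)^η₁| = 2 * |K₁| * (u ε)^η₁ := by
      rw [abs_mul, abs_mul, abs_of_nonneg h0]; norm_num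
    have h3 : |2*R (u ε)| = 2*|R (u ε)| := by
      rw [abs_mul]; norm_num
    rw [h2, h3] at h1
    have h4 : |R (u ε)| ≤ (u ε)^η₁ := h
    nlinarith [abs_nonneg (R (u ε))]
  have hpow : Tendsto (fun ε => (u ε)^(η₁-2)) l (𝓝 0) := by
    have hc : ContinuousAt (fun x : ℝ => x^(η₁-2)) 0 :=
      Real.continuousAt_rpow_const 0 (η₁-2) (Or.inr (by linarith))
    have h2 := hc.tendsto.comp hψ0
    simpa [Function.comp_def, Real.zero_rpow (ne_of_gt (by linarith : (0:ℝ) < η₁ - 2))] using h2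
  have hsplit : ∀ᶠ ε in l, (u ε)^η₁ = (u ε)^(η₁-2) * (u ε)^2 := by
    filter_upwards [hupos] with ε hp
    rw [← Real.rpow_natCast (u ε) 2, ← Real.rpow_add hp]
    norm_num
  have hsq : ∀ᶠ ε in l, (u ε + ε)^2 = C*ε^2 - E ε := by
    filter_upwards [hψ] with ε hε
    have heq := hε.1
    simp only [hE, hCdef]
    linear_combination 2 * heq
  have hE2 : ∀ᶠ ε in l, |E ε| ≤ M * (u ε)^(η₁-2) * (u ε)^2 := by
    filter_upwards [hEbound, hsplit] with ε h1 h2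
    rw [mul_assoc, ← h2]; exact h1
  have hub : ∀ᶠ ε in l, (u ε)^2 ≤ 2*C*ε^2 := by
    have hsmall : ∀ᶠ ε in l, M * (u ε)^(η₁-2) ≤ 1/2 := by
      have h1 : Tendsto (fun ε => M * (u ε)^(η₁-2)) l (𝓝 (M * 0)) := hpow.const_mul M
      rw [mul_zero] at h1
      exact h1.eventually (eventually_le_nhds (by norm_num))
    filter_upwards [hsq, hE2, hsmall, hψ, hεpos] with ε h1 h2 h3 h4 h5
    have hup := h4.2
    have hrnn : (0:ℝ) ≤ (u ε)^(η₁-2) := Real.rpow_nonneg hup _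
    have hEle : |E ε| ≤ (1/2) * (u ε)^2 := by
      calc |E ε| ≤ M * (u ε)^(η₁-2) * (u ε)^2 := h2
      _ ≤ (1/2) * (u ε)^2 := by nlinarith [sq_nonneg (u ε)]
    have habs := abs_le.mp hEle
    nlinarith [mul_nonneg hup h5.le, sq_nonneg ε]
  have hEε0 : Tendsto (fun ε => E ε / ε^2) l (𝓝 0) := by
    have hgt : Tendsto (fun ε => M * (u ε)^(η₁-2) * (2*C)) l (𝓝 0) := by
      have h1 := (hpow.const_mul M).mul_const (2*C)
      simpa using h1
    refine squeeze_zero_norm' ?_ hgt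
    filter_upwards [hE2, hub, hεpos, hupos] with ε h2 h3 h5 hp
    have hε2 : (0:ℝ) < ε^2 := by positivity
    have hrnn : (0:ℝ) ≤ M * (u ε)^(η₁-2) :=
      mul_nonneg hMpos.le (Real.rpow_nonneg hp.le _)
    rw [Real.norm_eq_abs, abs_div, abs_of_nonneg hε2.le, div_le_iff₀ hε2]
    calc |E ε| ≤ M * (u ε)^(η₁-2) * (u ε)^2 := h2
    _ ≤ M * (u ε)^(η₁-2) * (2*C*ε^2) := mul_le_mul_of_nonneg_left h3 hrnn
    _ = M * (u ε)^(η₁-2) * (2*C) * ε^2 := by ring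
  have hw : Tendsto (fun ε => C - E ε / ε^2) l (𝓝 C) := by
    have h1 := hEε0.const_sub C
    simpa using h1
  have hv : Tendsto (fun ε => (u ε + ε)/ε) l (𝓝 c) := by
    have hsqrt : Tendsto (fun ε => Real.sqrt (C - E ε / ε^2)) l (𝓝 (Real.sqrt C)) :=
      (Real.continuous_sqrt.tendsto C).comp hw
    apply hsqrt.congr'
    filter_upwards [hsq, hεpos, hψ] with ε h1 h2 h3
    have hnum : 0 ≤ (u ε + ε)/ε := div_nonneg (by linarith [h3.2]) h2.le
    have hkey : C - E ε / ε^2 = ((u ε + ε)/ε)^2 := by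
      rw [div_pow, h1]
      field_simp
    rw [hkey, Real.sqrt_sq hnum]
  rw [isLittleO_iff]
  intro δ hδ
  have hvc : Tendsto (fun ε => |(u ε + ε)/ε - c|) l (𝓝 0) := by
    have h1 := (hv.sub_const c).abs
    simpa using h1
  have habs : ∀ᶠ ε in l, |(u ε + ε)/ε - c| ≤ δ :=
    hvc.eventually (eventually_le_nhds hδ)
  filter_upwards [habs, hεpos] with ε h1 h2
  have hrw : u ε - (-ε + ε*c) = ε * ((u ε + ε)/ε - c) := by
    field_simp
    ring
  rw [hrw, Real.norm_eq_abs, Real.norm_eq_abs, abs_mul]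
  calc |ε| * |(u ε + ε)/ε - c| ≤ |ε| * δ :=
        mul_le_mul_of_nonneg_left h1 (abs_nonneg ε)
  _ = δ * |ε| := mul_comm _ _

/-- Regime II inverse expansion: if φ_ε(x) = xε + ½x² + K₁x^{η₁} + o(x^{η₁})
with 2 < η₁ ≤ 3, then the inverse ψ_ε satisfies
ψ_ε(sε²(γ-1)) = -ε + ε√(1+2s(γ-1)) + o(ε) as ε ↓ 0, for fixed s > 0 and γ > 1. -/
theorem stmt_10 (γ K₁ η₁ : ℝ) (hγ : 1 < γ) (hη : 2 < η₁) (hη' : η₁ ≤ 3)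
    (R : ℝ → ℝ) (hR : R =o[𝓝[>] (0:ℝ)] fun x => x ^ η₁)
    (φ : ℝ → ℝ → ℝ)
    (hφ : ∀ ε x : ℝ, φ ε x = x*ε + x^2/2 + K₁ * x ^ η₁ + R x)
    (ψ : ℝ → ℝ → ℝ)
    (s : ℝ) (hs : 0 < s)
    (hψ : ∀ᶠ ε in 𝓝[>] (0:ℝ), φ ε (ψ ε (s*ε^2*(γ-1))) = s*ε^2*(γ-1) ∧
      0 ≤ ψ ε (s*ε^2*(γ-1)))
    (hψ0 : Tendsto (fun ε : ℝ => ψ ε (s*ε^2*(γ-1))) (𝓝[>] 0) (𝓝 0)) :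
    (fun ε : ℝ => ψ ε (s*ε^2*(γ-1)) - (-ε + ε * Real.sqrt (1 + 2*s*(γ-1)))) =o[𝓝[>] 0]
      fun ε => ε := by
  have hψ' : ∀ᶠ ε in 𝓝[>] (0:ℝ),
      (fun ε : ℝ => ψ ε (s*ε^2*(γ-1))) ε * ε + ((fun ε : ℝ => ψ ε (s*ε^2*(γ-1))) ε)^2/2
        + K₁ * ((fun ε : ℝ => ψ ε (s*ε^2*(γ-1))) ε) ^ η₁
        + R ((fun ε : ℝ => ψ ε (s*ε^2*(γ-1))) ε) = s*ε^2*(γ-1)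
        ∧ 0 ≤ (fun ε : ℝ => ψ ε (s*ε^2*(γ-1))) ε := by
    filter_upwards [hψ] with ε hε
    refine ⟨?_, hε.2⟩
    have h1 := hε.1
    rw [hφ] at h1
    simpa using h1
  exact my_aux γ K₁ η₁ hγ hη R hR s hs (fun ε : ℝ => ψ ε (s*ε^2*(γ-1))) hψ' hψ0
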